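/- Let α be a nonzero rational number and let A = ⊕ A_n^p be a chain complex of graded vector spaces (extra grading indexed by p, homological degree n) whose homology is α-pure, i.e., H_n(A)^p = 0 whenever p ≠ αn. Define the truncation τA by (τA)_n^p = A_n^p if n > ⌈p/α⌉, (τA)_n^p = Ker(d: A_n^p → A_{n-1}^p) if n = ⌈p/α⌉, and (τA)_n^p = 0 if n < ⌈p/α⌉. Then the inclusion τA ↪ A is a quasi-isomorphism. -/

import Mathlib

open CategoryTheory Limits

/-- The truncation-submodule of a chain complex `C` at threshold `c` in degree `k`:
all of `C.X k` if `k > c`, the cycles `Ker (d : C_k → C_{k-1})` if `k = c`, and `0`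
if `k < c`. -/
noncomputable def tauSubmodule (C : ChainComplex (ModuleCat ℚ) ℤ) (c k : ℤ) :
    Submodule ℚ (C.X k) :=
  if c < k then ⊤ else if k = c then LinearMap.ker (C.d k (k - 1)).hom else ⊥

/-- If `Φ.τ₂` is injective with range exactly the cycles of `S₂`, and `Φ.τ₃` is
injective, then `Φ` induces an isomorphism on cycles. -/
lemma aux_cyclesMap_isIso {S₁ S₂ : ShortComplex (ModuleCat ℚ)} (Φ : S₁ ⟶ S₂)
    (hinj2 : Function.Injective Φ.τ₂) (hinj3 : Function.Injective Φ.τ₃)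
    (hr : LinearMap.range Φ.τ₂.hom = LinearMap.ker S₂.g.hom) :
    IsIso (ShortComplex.cyclesMap Φ) := by
  set e : S₁.moduleCatLeftHomologyData.K ⟶ S₂.moduleCatLeftHomologyData.K :=
    S₁.moduleCatCyclesIso.inv ≫ ShortComplex.cyclesMap Φ ≫ S₂.moduleCatCyclesIso.hom with he
  have hee : e ≫ S₂.moduleCatLeftHomologyData.i = S₁.moduleCatLeftHomologyData.i ≫ Φ.τ₂ := by
    simp [he]
  have helt : ∀ x : LinearMap.ker S₁.g.hom,
      (LinearMap.ker S₂.g.hom).subtype (e x) = Φ.τ₂ ((LinearMap.ker S₁.g.hom).subtype x) :=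
    fun x => ConcreteCategory.congr_hom hee x
  have hbij : Function.Bijective e := by
    constructor
    · intro x y hxy
      have hv : (LinearMap.ker S₁.g.hom).subtype x = (LinearMap.ker S₁.g.hom).subtype y :=
        hinj2 (by rw [← helt x, ← helt y, hxy])
      exact Subtype.val_injective hv
    · rintro ⟨z, hz⟩
      have hz' : z ∈ LinearMap.range Φ.τ₂.hom := by rw [hr]; exact hz
      obtain ⟨y, hy⟩ := hz'
      have hcomm : S₂.g (Φ.τ₂ y) = Φ.τ₃ (S₁.g y) := ConcreteCategory.congr_hom Φ.comm₂₃ y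
      have hyk : y ∈ LinearMap.ker S₁.g.hom := by
        show S₁.g y = 0
        apply hinj3
        rw [map_zero, ← hcomm, hy]
        exact hz
      refine ⟨⟨y, hyk⟩, ?_⟩
      exact Subtype.val_injective ((helt ⟨y, hyk⟩).trans hy)
  have hie : IsIso e := (ConcreteCategory.isIso_iff_bijective e).2 hbij
  have hcm : ShortComplex.cyclesMap Φ =
      S₁.moduleCatCyclesIso.hom ≫ e ≫ S₂.moduleCatCyclesIso.inv := by
    simp [he]
  rw [hcm]
  infer_instance

/-- Auxiliary lemma: if `φ.f (n+1)` is an isomorphism, `φ.f n` and `φ.f (n-1)` are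
injective, and the range of `φ.f n` is exactly the `n`-cycles of `C₂`, then `φ` is a
quasi-isomorphism in degree `n`. -/
lemma aux_quasiIsoAt_mid (C₁ C₂ : ChainComplex (ModuleCat ℚ) ℤ) (φ : C₁ ⟶ C₂) (n : ℤ)
    (h1 : IsIso (φ.f (n + 1))) (hinj2 : Function.Injective (φ.f n))
    (hinj3 : Function.Injective (φ.f (n - 1)))
    (hr : LinearMap.range (φ.f n).hom = LinearMap.ker (C₂.d n (n - 1)).hom) :
    QuasiIsoAt φ n := by
  rw [quasiIsoAt_iff' φ (n + 1) n (n - 1) (by simp) (by simp)]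
  rw [ShortComplex.quasiIso_iff]
  apply ShortComplex.isIso_homologyMap_of_isIso_cyclesMap_of_epi
  · exact aux_cyclesMap_isIso _ hinj2 hinj3 hr
  · show Epi (φ.f (n + 1))
    infer_instance

theorem truncation_inclusion_quasiIso (α : ℚ) (hα : α ≠ 0)
    (A K : ℤ → ChainComplex (ModuleCat ℚ) ℤ)
    (hpure : ∀ p n : ℤ, (p : ℚ) ≠ α * (n : ℚ) → IsZero ((A p).homology n))
    (ι : ∀ p, K p ⟶ A p)
    (hmono : ∀ p k, Mono ((ι p).f k))
    (hrange : ∀ p k, LinearMap.range ((ι p).f k).hom = tauSubmodule (A p) ⌈(p : ℚ) / α⌉ k)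
    (p : ℤ) : QuasiIso (ι p) := by
  set c : ℤ := ⌈(p : ℚ) / α⌉ with hc
  have hinj : ∀ k, Function.Injective ((ι p).f k) := fun k =>
    (ModuleCat.mono_iff_injective _).1 (hmono p k)
  have hiso : ∀ k, c < k → IsIso ((ι p).f k) := by
    intro k hk
    rw [ConcreteCategory.isIso_iff_bijective]
    refine ⟨hinj k, fun y => ?_⟩
    have : y ∈ LinearMap.range ((ι p).f k).hom := by
      rw [hrange p k, tauSubmodule, if_pos hk]
      trivial
    exact this
  have hzero : ∀ k, k < c → IsZero ((K p).X k) := by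
    intro k hk
    have h0 : ∀ x : (K p).X k, x = 0 := by
      intro x
      apply hinj k
      have hx : (ι p).f k x ∈ LinearMap.range ((ι p).f k).hom := ⟨x, rfl⟩
      rw [hrange p k, tauSubmodule, if_neg (by omega), if_neg (by omega)] at hx
      simpa using hx
    have : Subsingleton ((K p).X k) := ⟨fun a b => by rw [h0 a, h0 b]⟩
    exact ModuleCat.isZero_of_subsingleton _
  have harith : ∀ n : ℤ, n < c → (p : ℚ) ≠ α * (n : ℚ) := by
    intro n hn heq
    have hdiv : (p : ℚ) / α = (n : ℚ) := by
      rw [heq, mul_div_cancel_left₀ _ hα]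
    rw [hc, hdiv, Int.ceil_intCast] at hn
    omega
  refine ⟨fun n => ?_⟩
  rcases lt_trichotomy n c with h | h | h
  · -- n < c : both complexes are exact at n
    have hK : (K p).ExactAt n := by
      rw [HomologicalComplex.exactAt_iff]
      exact ShortComplex.exact_of_isZero_X₂ _ (hzero n h)
    rw [quasiIsoAt_iff_exactAt _ _ hK, HomologicalComplex.exactAt_iff_isZero_homology]
    exact hpure p n (harith n h)
  · -- n = c : the middle case
    apply aux_quasiIsoAt_mid
    · exact hiso (n + 1) (by omega)
    · exact hinj n
    · exact hinj (n - 1)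
    · rw [hrange p n, tauSubmodule, if_neg (by omega), if_pos h]
  · -- n > c : the map is an isomorphism in the relevant degrees
    rw [quasiIsoAt_iff' (ι p) (n + 1) n (n - 1) (by simp) (by simp)]
    have h1 : IsIso ((ι p).f (n + 1)) := hiso (n + 1) (by omega)
    have h2 : IsIso ((ι p).f n) := hiso n h
    haveI : Epi (((HomologicalComplex.shortComplexFunctor' (ModuleCat ℚ)
        (ComplexShape.down ℤ) (n + 1) n (n - 1)).map (ι p)).τ₁) := by
      show Epi ((ι p).f (n + 1)); infer_instance
    haveI : IsIso (((HomologicalComplex.shortComplexFunctor' (ModuleCat ℚ)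
        (ComplexShape.down ℤ) (n + 1) n (n - 1)).map (ι p)).τ₂) := by
      show IsIso ((ι p).f n); infer_instance
    haveI : Mono (((HomologicalComplex.shortComplexFunctor' (ModuleCat ℚ)
        (ComplexShape.down ℤ) (n + 1) n (n - 1)).map (ι p)).τ₃) := by
      show Mono ((ι p).f (n - 1)); exact hmono p (n - 1)
    exact ShortComplex.quasiIso_of_epi_of_isIso_of_mono _
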